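/- A graph G (2-uniform hypergraph) with real symmetric adjacency matrix A is regular (in the sense that no nonzero complex vector x satisfies A x = 0 and xᵀx = 0) if and only if the nullity of A is at most 1. -/
import Mathlib

lemma quad_root (α β γ : ℂ) :
    ∃ a b : ℂ, ¬(a = 0 ∧ b = 0) ∧ α * a ^ 2 + β * (a * b) + γ * b ^ 2 = 0 := by
  by_cases hα : α = 0
  · exact ⟨1, 0, by simp, by simp [hα]⟩
  · obtain ⟨s, hs⟩ := IsAlgClosed.exists_pow_nat_eq (k := ℂ) (β ^ 2 - 4 * α * γ)
      (n := 2) (by norm_num)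
    refine ⟨-β - s, 2 * α, ?_, ?_⟩
    · rintro ⟨-, h⟩
      exact hα (by simpa using h)
    · linear_combination α * hs

set_option maxHeartbeats 800000 in
theorem graph_regular_iff_nullity_le_one {n : ℕ}
    (A : Matrix (Fin n) (Fin n) ℝ) (hA : A.IsSymm) :
    (¬ ∃ x : Fin n → ℂ, x ≠ 0 ∧
        (A.map (fun a => (a : ℂ))).mulVec x = 0 ∧ ∑ i, x i ^ 2 = 0) ↔
      Module.finrank ℝ (LinearMap.ker A.mulVecLin) ≤ 1 := by
  constructor
  · intro h
    by_contra hle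
    push_neg at hle
    obtain ⟨f, hf⟩ := exists_linearIndependent_of_le_finrank (n := 2) hle
    set u : Fin n → ℝ := (f 0 : Fin n → ℝ) with hu'
    set v : Fin n → ℝ := (f 1 : Fin n → ℝ) with hv'
    have hu : A.mulVec u = 0 := LinearMap.mem_ker.mp (f 0).2
    have hv : A.mulVec v = 0 := LinearMap.mem_ker.mp (f 1).2
    have hind : ∀ a b : ℝ, (∀ i, a * u i + b * v i = 0) → a = 0 ∧ b = 0 := by
      intro a b hab
      have h0 : (![a, b] 0) • f 0 + (![a, b] 1) • f 1 = 0 := by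
        apply Subtype.ext
        simp only [Submodule.coe_add, SetLike.val_smul, Matrix.cons_val_zero,
          Matrix.cons_val_one, Matrix.head_cons, ZeroMemClass.coe_zero]
        funext i
        simp only [Pi.add_apply, Pi.smul_apply, smul_eq_mul, Pi.zero_apply, ← hu', ← hv']
        exact hab i
      have := (Fintype.linearIndependent_iff.mp hf) ![a, b] (by
        rw [Fin.sum_univ_two]; exact h0)
      exact ⟨this 0, this 1⟩
    obtain ⟨a, b, hab, habq⟩ := quad_root ((∑ i, u i ^ 2 : ℝ) : ℂ)
      (2 * ((∑ i, u i * v i : ℝ) : ℂ)) ((∑ i, v i ^ 2 : ℝ) : ℂ)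
    apply h
    refine ⟨fun i => a * (u i : ℂ) + b * (v i : ℂ), ?_, ?_, ?_⟩
    · intro hx0
      have hre : ∀ i, a.re * u i + b.re * v i = 0 := by
        intro i
        have := congrFun hx0 i
        have := congrArg Complex.re this
        simpa using this
      have him : ∀ i, a.im * u i + b.im * v i = 0 := by
        intro i
        have := congrFun hx0 i
        have := congrArg Complex.im this
        simpa using this
      obtain ⟨h1, h2⟩ := hind _ _ hre
      obtain ⟨h3, h4⟩ := hind _ _ him
      exact hab ⟨Complex.ext h1 h3, Complex.ext h2 h4⟩
    · funext j
      have hu0 : ∑ i, A j i * u i = 0 := congrFun hu j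
      have hv0 : ∑ i, A j i * v i = 0 := congrFun hv j
      have : (A.map (fun a => (a : ℂ))).mulVec (fun i => a * (u i : ℂ) + b * (v i : ℂ)) j
          = a * ((∑ i, A j i * u i : ℝ) : ℂ) + b * ((∑ i, A j i * v i : ℝ) : ℂ) := by
        simp only [Matrix.mulVec, dotProduct, Matrix.map_apply]
        push_cast
        rw [Finset.mul_sum, Finset.mul_sum, ← Finset.sum_add_distrib]
        exact Finset.sum_congr rfl (fun i _ => by ring)
      rw [this, hu0, hv0]
      simp
    · have : ∑ i, (a * (u i : ℂ) + b * (v i : ℂ)) ^ 2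
          = ((∑ i, u i ^ 2 : ℝ) : ℂ) * a ^ 2 + (2 * ((∑ i, u i * v i : ℝ) : ℂ)) * (a * b)
            + ((∑ i, v i ^ 2 : ℝ) : ℂ) * b ^ 2 := by
        push_cast
        rw [Finset.sum_mul, Finset.sum_mul, Finset.mul_sum, Finset.sum_mul,
          ← Finset.sum_add_distrib, ← Finset.sum_add_distrib]
        exact Finset.sum_congr rfl (fun i _ => by ring)
      rw [this, habq]
  · rintro hle ⟨x, hx0, hAx, hxs⟩
    obtain ⟨w, hw⟩ := finrank_le_one_iff.mp hle
    set y : Fin n → ℝ := fun i => (x i).re with hy'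
    set z : Fin n → ℝ := fun i => (x i).im with hz'
    have key : ∀ (g : Fin n → ℝ), (∀ i, g i = (x i).re) ∨ (∀ i, g i = (x i).im) →
        A.mulVec g = 0 := by
      intro g hg
      funext j
      have hj := congrFun hAx j
      have hj' : ∑ i, (A j i : ℂ) * x i = 0 := by
        simpa [Matrix.mulVec, dotProduct, Matrix.map_apply] using hj
      rcases hg with hg | hg
      · have := congrArg Complex.re hj'
        simpa [Complex.re_sum, hg, Matrix.mulVec, dotProduct] using this
      · have := congrArg Complex.im hj'
        simpa [Complex.im_sum, hg, Matrix.mulVec, dotProduct] using this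
    have hy : A.mulVec y = 0 := key y (Or.inl fun i => rfl)
    have hz : A.mulVec z = 0 := key z (Or.inr fun i => rfl)
    obtain ⟨cy, hcy⟩ := hw ⟨y, LinearMap.mem_ker.mpr hy⟩
    obtain ⟨cz, hcz⟩ := hw ⟨z, LinearMap.mem_ker.mpr hz⟩
    have hcy' : ∀ i, y i = cy * (w : Fin n → ℝ) i := fun i =>
      (congrFun (congrArg Subtype.val hcy) i).symm
    have hcz' : ∀ i, z i = cz * (w : Fin n → ℝ) i := fun i =>
      (congrFun (congrArg Subtype.val hcz) i).symm
    have hxw : ∀ i, x i = (cy + cz * Complex.I) * ((w : Fin n → ℝ) i : ℂ) := by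
      intro i
      rw [← Complex.re_add_im (x i)]
      rw [show (x i).re = y i from rfl, show (x i).im = z i from rfl, hcy' i, hcz' i]
      push_cast
      ring
    have hsum : (cy + cz * Complex.I) ^ 2 * ((∑ i, (w : Fin n → ℝ) i ^ 2 : ℝ) : ℂ) = 0 := by
      rw [← hxs]
      push_cast
      rw [Finset.mul_sum]
      exact Finset.sum_congr rfl (fun i _ => by rw [hxw i]; ring) |>.symm
    have hc0 : cy + cz * Complex.I ≠ 0 := by
      intro hc
      apply hx0
      funext i
      rw [hxw i, hc, zero_mul]
      rfl
    have hw0 : (∑ i, (w : Fin n → ℝ) i ^ 2 : ℝ) = 0 := by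
      have := (mul_eq_zero.mp hsum).resolve_left (pow_ne_zero 2 hc0)
      exact_mod_cast this
    have hwz : ∀ i, (w : Fin n → ℝ) i = 0 := by
      intro i
      have := Finset.sum_eq_zero_iff_of_nonneg (fun i _ => sq_nonneg ((w : Fin n → ℝ) i)) |>.mp hw0 i (Finset.mem_univ i)
      exact pow_eq_zero_iff (by norm_num) |>.mp this
    apply hx0
    funext i
    rw [hxw i, hwz i]
    simp
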